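/- The space X_crs is not regular: every open neighborhood of the origin x intersects every open neighborhood of the closed set A = ⋃_{n≥1} e_n^0. -/

import Mathlib

open Set Topology Filter

noncomputable section

/-- The closed unit disk. -/
def D : Type := {z : ℂ // ‖z‖ ≤ 1}

instance : TopologicalSpace D := instTopologicalSpaceSubtype

/-- The wedge point on each disk. -/
def basept : D := ⟨1, by norm_num⟩

/-- The outer point (outer 0-cell) on each disk. -/
def outerpt : D := ⟨-1, by norm_num⟩

/-- Wedge relation: glue all copies of the base point together. -/
def wsetoid : Setoid (ℕ × D) where
  r p q := p = q ∨ (p.2 = basept ∧ q.2 = basept)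
  iseqv := by
    constructor
    · intro p; exact Or.inl rfl
    · rintro p q (rfl | ⟨h1, h2⟩)
      · exact Or.inl rfl
      · exact Or.inr ⟨h2, h1⟩
    · rintro p q r (rfl | ⟨h1, h2⟩) (rfl | ⟨h3, h4⟩)
      · exact Or.inl rfl
      · exact Or.inr ⟨h3, h4⟩
      · exact Or.inr ⟨h1, h2⟩
      · exact Or.inr ⟨h1, h4⟩

/-- The wedge of countably many closed 2-disks, with the weak (CW) topology. -/
def X : Type := Quotient wsetoid

instance : TopologicalSpace X := instTopologicalSpaceQuotient

/-- The point of the `n`-th disk with disk-coordinate `z`. -/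
def pt (n : ℕ) (z : D) : X := Quotient.mk wsetoid (n, z)

/-- The origin (the wedge point `x`). -/
def origin : X := pt 0 basept

/-- The outer 0-cell `e_n^0` of the `n`-th disk. -/
def outer (n : ℕ) : X := pt n outerpt

/-- The `n`-th closed 2-cell `C_n`. -/
def cell (n : ℕ) : Set X := Set.range (pt n)

/-- The open sets of the coarser topology `τ`: CW-open sets which either do not
contain the origin, or contain all but finitely many punctured cells `C_n \ {e_n^0}`. -/
def crsOpen (U : Set X) : Prop :=
  IsOpen U ∧ (origin ∉ U ∨ {n : ℕ | ¬ (cell n \ {outer n} ⊆ U)}.Finite)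

/-- The coarser topology `τ` on the wedge of disks. -/
def crsTop : TopologicalSpace X where
  IsOpen := crsOpen
  isOpen_univ := ⟨isOpen_univ, Or.inr (Set.Finite.subset Set.finite_empty
    (fun _ hn => absurd (Set.subset_univ _) hn))⟩
  isOpen_inter := by
    rintro U V ⟨hU, hU2⟩ ⟨hV, hV2⟩
    refine ⟨hU.inter hV, ?_⟩
    by_cases hx : origin ∈ U ∩ V
    · have h1 := hU2.resolve_left (fun h => h hx.1)
      have h2 := hV2.resolve_left (fun h => h hx.2)
      refine Or.inr ((h1.union h2).subset ?_)
      intro n hn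
      by_contra hc
      simp only [Set.mem_union, Set.mem_setOf_eq, not_or, not_not] at hc
      exact hn (Set.subset_inter hc.1 hc.2)
    · exact Or.inl hx
  isOpen_sUnion := by
    intro S hS
    refine ⟨isOpen_sUnion fun U hU => (hS U hU).1, ?_⟩
    by_cases hx : origin ∈ ⋃₀ S
    · obtain ⟨U, hUS, hxU⟩ := hx
      have h1 := (hS U hUS).2.resolve_left (fun h => h hxU)
      refine Or.inr (h1.subset ?_)
      intro n hn hsub
      exact hn (hsub.trans (Set.subset_sUnion_of_mem hUS))
    · exact Or.inl hx

/-- The open set `U₀`: complement of all the outer 0-cells. -/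
def U0 : Set X := {y | ∀ n, y ≠ outer n}

/-- The set `A` of all outer 0-cells. -/
def A : Set X := Set.range outer

instance : MetricSpace D := inferInstanceAs (MetricSpace {z : ℂ // ‖z‖ ≤ 1})

lemma basept_ne_outerpt : basept ≠ outerpt := by
  intro h
  have : (1 : ℂ) = -1 := congrArg Subtype.val h
  norm_num at this

lemma continuous_mk : Continuous (Quotient.mk wsetoid) := continuous_coinduced_rng

lemma continuous_pt (n : ℕ) : Continuous (pt n) :=
  continuous_mk.comp (Continuous.prodMk_right n)

lemma pt_eq_outer_iff {n : ℕ} {z : D} : pt n z = outer n ↔ z = outerpt := by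
  constructor
  · intro h
    rcases Quotient.exact h with h | ⟨h1, h2⟩
    · exact (Prod.mk.injEq .. ▸ h).2
    · exact absurd h2.symm basept_ne_outerpt
  · rintro rfl; rfl

lemma mem_A_iff {p : ℕ × D} : Quotient.mk wsetoid p ∈ A ↔ p.2 = outerpt := by
  constructor
  · rintro ⟨m, hm⟩
    rcases Quotient.exact hm with h | ⟨h1, h2⟩
    · rw [← h]
    · exact absurd h1.symm basept_ne_outerpt
  · intro h
    exact ⟨p.1, Quotient.sound (Or.inl (Prod.ext rfl h.symm))⟩

/-- `X_crs` is not regular: `A` is closed, yet every open neighborhood of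
the origin meets every open neighborhood of `A`. -/
theorem crs_not_regular :
    @IsClosed X crsTop A ∧
    ∀ U V : Set X, IsOpen[crsTop] U → IsOpen[crsTop] V → origin ∈ U → A ⊆ V →
      (U ∩ V).Nonempty := by
  constructor
  · -- A is closed in crsTop
    rw [← @isOpen_compl_iff X A crsTop]
    refine ⟨?_, Or.inr ?_⟩
    · -- Aᶜ is open in the quotient topology
      have : Quotient.mk wsetoid ⁻¹' Aᶜ = Prod.snd ⁻¹' ({outerpt}ᶜ) := by
        ext p
        simp only [Set.mem_preimage, Set.mem_compl_iff, Set.mem_singleton_iff]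
        exact not_congr mem_A_iff
      refine isOpen_coinduced.mpr ?_
      show IsOpen (Quotient.mk wsetoid ⁻¹' Aᶜ)
      rw [this]
      exact (isOpen_compl_singleton).preimage continuous_snd
    · -- the bad set is empty
      refine Set.Finite.subset Set.finite_empty fun n hn => ?_
      exfalso; apply hn
      rintro y ⟨⟨z, rfl⟩, hy⟩ ⟨m, hm⟩
      rcases Quotient.exact hm with h | ⟨h1, h2⟩
      · apply hy
        simp only [Set.mem_singleton_iff]
        rw [pt_eq_outer_iff]
        exact ((Prod.mk.injEq _ _ _ _).mp h).2.symm
      · exact basept_ne_outerpt h1.symm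
  · intro U V hU hV hxU hAV
    obtain ⟨hUo, hU2⟩ := hU
    have hF : {n : ℕ | ¬ (cell n \ {outer n} ⊆ U)}.Finite := hU2.resolve_left (fun h => h hxU)
    obtain ⟨n, hn⟩ := hF.infinite_compl.nonempty
    have hnU : cell n \ {outer n} ⊆ U := not_not.mp hn
    -- V is open in the quotient topology, pull back to the disk
    have hVD : IsOpen ((pt n) ⁻¹' V) := (continuous_pt n).isOpen_preimage V hV.1
    have houter : outerpt ∈ (pt n) ⁻¹' V := hAV ⟨n, rfl⟩
    obtain ⟨ε, hε, hball⟩ := Metric.isOpen_iff.mp hVD outerpt houter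
    set δ : ℝ := min ε 2 / 2 with hδdef
    have hδpos : 0 < δ := by positivity
    have hδlt : δ < ε := by
      rcases min_cases ε 2 with ⟨h, _⟩ | ⟨h, h2⟩ <;> rw [hδdef, h] <;> linarith
    have hδle : δ ≤ 1 := by
      have : min ε 2 ≤ 2 := min_le_right _ _
      rw [hδdef]; linarith
    have hnorm : ‖((-1 + δ : ℝ) : ℂ)‖ ≤ 1 := by
      rw [Complex.norm_real, Real.norm_eq_abs, abs_le]; constructor <;> [linarith; linarith]
    set z : D := ⟨((-1 + δ : ℝ) : ℂ), hnorm⟩ with hz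
    have hzV : z ∈ (pt n) ⁻¹' V := by
      apply hball
      have : dist z outerpt = δ := by
        have : dist z outerpt = dist (((-1 + δ : ℝ) : ℂ)) (-1 : ℂ) := rfl
        rw [this, Complex.dist_eq]
        have : ((-1 + δ : ℝ) : ℂ) - (-1) = ((δ : ℝ) : ℂ) := by push_cast; ring
        rw [this, Complex.norm_real, Real.norm_eq_abs, abs_of_pos hδpos]
      rw [Metric.mem_ball, this]; exact hδlt
    have hzne : z ≠ outerpt := by
      intro h
      have : ((-1 + δ : ℝ) : ℂ) = -1 := congrArg Subtype.val h
      have h2 : (-1 + δ : ℝ) = -1 := by exact_mod_cast this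
      linarith
    refine ⟨pt n z, ?_, hzV⟩
    apply hnU
    refine ⟨⟨z, rfl⟩, ?_⟩
    simp only [Set.mem_singleton_iff]
    rw [pt_eq_outer_iff]
    exact hzne

end
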